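/- Let J be positive and strictly decreasing, N ≥ 2, and h ∈ ℝ. For every configuration σ with exactly k plus spins, H(σ) ≥ 2 ∑_{i=1}^k ∑_{j=k+1}^N J(|i-j|) + h(N - 2k) - (1/2)∑_{i=1}^N ∑_{j=1}^N J(|i-j|), with equality if and only if σ = L^(k) or σ = R^(k). -/

import Mathlib

open Finset

/-- Long-range Ising Hamiltonian with free boundary conditions on {0,...,N-1}:
`H(σ) = -∑_{i<j} J(|i-j|) σᵢ σⱼ - h ∑ᵢ σᵢ`. -/
noncomputable def H (N : ℕ) (J : ℕ → ℝ) (h : ℝ) (σ : Fin N → ℝ) : ℝ :=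
  -(∑ i : Fin N, ∑ j : Fin N,
      if (i : ℕ) < (j : ℕ) then J (Nat.dist (i : ℕ) (j : ℕ)) * σ i * σ j else 0)
    - h * ∑ i : Fin N, σ i

/-- A spin configuration takes values in {-1, +1}. -/
def IsConfig {N : ℕ} (σ : Fin N → ℝ) : Prop := ∀ i, σ i = 1 ∨ σ i = -1

/-- The configuration `L^(k)`: +1 on the first k sites, -1 elsewhere. -/
def Lconf (N k : ℕ) : Fin N → ℝ := fun i => if (i : ℕ) < k then 1 else -1

/-- The configuration `R^(k)`: +1 on the last k sites, -1 elsewhere. -/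
def Rconf (N k : ℕ) : Fin N → ℝ := fun i => if N - k ≤ (i : ℕ) then 1 else -1

/-- number of pairs `i < j ≤ i + m` inside `S` -/
def cnt (m : ℕ) (S : Finset ℕ) : ℕ :=
  ((S ×ˢ S).filter fun p => p.1 < p.2 ∧ p.2 ≤ p.1 + m).card

lemma smGap {n : ℕ} {f : Fin n → ℕ} (hf : StrictMono f) :
    ∀ d (a b : Fin n), (b : ℕ) = a + d → f a + d ≤ f b := by
  intro d
  induction d with
  | zero => intro a b hab; have : a = b := Fin.ext (by omega); simp [this]
  | succ d ih =>
    intro a b hab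
    have hb' : (a : ℕ) + d < n := by omega
    have h1 := ih a ⟨a + d, hb'⟩ rfl
    have h2 : f ⟨a + d, hb'⟩ < f b := hf (by simp [Fin.lt_def, hab])
    omega

lemma cnt_Ico (m a l : ℕ) : cnt m (Ico a (a + l)) = cnt m (range l) := by
  unfold cnt
  apply Finset.card_bij (fun p _ => (p.1 - a, p.2 - a))
  · rintro ⟨x, y⟩ hp
    simp only [mem_filter, mem_product, mem_Ico] at hp
    simp only [mem_filter, mem_product, mem_range]
    omega
  · rintro ⟨x, y⟩ hx ⟨x', y'⟩ hx' hh
    simp only [mem_filter, mem_product, mem_Ico] at hx hx'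
    simp only [Prod.mk.injEq] at hh ⊢
    omega
  · rintro ⟨x, y⟩ hp
    simp only [mem_filter, mem_product, mem_range] at hp
    exact ⟨(x + a, y + a), by simp only [mem_filter, mem_product, mem_Ico]; omega, by
      simp only [Prod.mk.injEq]; omega⟩

section OrderIso
variable (S : Finset ℕ)

noncomputable def ofn : Fin S.card ≃o S := S.orderIsoOfFin rfl

noncomputable def fS : Fin S.card → ℕ := fun a => ((ofn S a : S) : ℕ)

lemma fS_strictMono : StrictMono (fS S) :=
  fun a b hab => Subtype.coe_lt_coe.2 ((ofn S).strictMono hab)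

noncomputable def idxS : ℕ → ℕ := fun x =>
  if h : x ∈ S then ((ofn S).symm ⟨x, h⟩ : ℕ) else 0

lemma fS_idx {x : ℕ} (hx : x ∈ S) : fS S ⟨idxS S x, by
    unfold idxS; rw [dif_pos hx]; exact (((ofn S).symm ⟨x, hx⟩)).isLt⟩ = x := by
  unfold fS idxS
  simp only [dif_pos hx]
  have : (⟨((ofn S).symm ⟨x, hx⟩ : ℕ), _⟩ : Fin S.card) = (ofn S).symm ⟨x, hx⟩ := rfl
  rw [this, OrderIso.apply_symm_apply]

lemma idxS_lt {x : ℕ} (hx : x ∈ S) : idxS S x < S.card := by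
  unfold idxS; rw [dif_pos hx]; exact (((ofn S).symm ⟨x, hx⟩)).isLt

lemma idxS_mono {x y : ℕ} (hx : x ∈ S) (hy : y ∈ S) (hxy : x < y) :
    idxS S x < idxS S y := by
  unfold idxS
  rw [dif_pos hx, dif_pos hy]
  exact_mod_cast (ofn S).symm.strictMono (show (⟨x,hx⟩ : S) < ⟨y,hy⟩ from hxy)

lemma idxS_gap {x y : ℕ} (hx : x ∈ S) (hy : y ∈ S) (hxy : x ≤ y) :
    y - x = 0 ∨ idxS S y ≤ idxS S x + (y - x) := by
  rcases Nat.eq_or_lt_of_le hxy with rfl | hlt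
  · left; omega
  right
  have hix := idxS_lt S hx
  have hiy := idxS_lt S hy
  have hmono := idxS_mono S hx hy hlt
  have := smGap (fS_strictMono S) (idxS S y - idxS S x) ⟨idxS S x, hix⟩ ⟨idxS S y, hiy⟩
    (by simp; omega)
  rw [fS_idx S hx, fS_idx S hy] at this
  omega

lemma idxS_inj {x y : ℕ} (hx : x ∈ S) (hy : y ∈ S) (hxy : idxS S x = idxS S y) :
    x = y := by
  unfold idxS at hxy
  rw [dif_pos hx, dif_pos hy] at hxy
  have := (ofn S).symm.injective (Fin.ext hxy : (ofn S).symm ⟨x,hx⟩ = (ofn S).symm ⟨y,hy⟩)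
  exact congrArg Subtype.val this

end OrderIso

lemma fS_mem (S : Finset ℕ) (b : Fin S.card) : fS S b ∈ S := (ofn S b).2

lemma cnt_le (m : ℕ) (S : Finset ℕ) : cnt m S ≤ cnt m (range S.card) := by
  unfold cnt
  apply Finset.card_le_card_of_injOn (fun p => (idxS S p.1, idxS S p.2))
  · rintro ⟨x, y⟩ hp
    simp only [coe_filter, Set.mem_setOf_eq, mem_filter, mem_product, mem_range] at hp ⊢
    obtain ⟨⟨hx, hy⟩, hxy, hgap⟩ := hp
    refine ⟨⟨idxS_lt S hx, idxS_lt S hy⟩, idxS_mono S hx hy hxy, ?_⟩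
    rcases idxS_gap S hx hy hxy.le with h0 | h
    · omega
    · omega
  · rintro ⟨x, y⟩ hp ⟨x', y'⟩ hp' hh
    simp only [coe_filter, Set.mem_setOf_eq, mem_product] at hp hp'
    simp only [Prod.mk.injEq] at hh ⊢
    exact ⟨idxS_inj S hp.1.1 hp'.1.1 hh.1, idxS_inj S hp.1.2 hp'.1.2 hh.2⟩

lemma cnt_eq_interval {N l : ℕ} {S : Finset ℕ} (hS : S ⊆ range N) (hl : S.card = l)
    (heq : ∀ m, 1 ≤ m → m < N → cnt m S = cnt m (range l)) :
    ∃ a, S = Ico a (a + l) := by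
  have hlN : l ≤ N := by
    have := Finset.card_le_card hS
    rw [card_range] at this; omega
  have claim : ∀ a b : Fin S.card, (a : ℕ) ≤ b → fS S b ≤ fS S a + ((b : ℕ) - a) := by
    by_contra hcon
    push_neg at hcon
    obtain ⟨a, b, hab, hbad⟩ := hcon
    have hne : (a : ℕ) < (b : ℕ) := by
      rcases Nat.eq_or_lt_of_le hab with heqab | h
      · exfalso; have : a = b := Fin.ext heqab; subst this; omega
      · exact h
    set m := (b : ℕ) - (a : ℕ) with hm
    have hm1 : 1 ≤ m := by omega
    have hmN : m < N := by have := b.isLt; omega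
    have hcnt := heq m hm1 hmN
    rw [← hl] at hcnt
    -- derive contradiction: cnt m S < cnt m (range S.card)
    set F := ((S ×ˢ S).filter fun p => p.1 < p.2 ∧ p.2 ≤ p.1 + m) with hF
    set G := (((range S.card) ×ˢ (range S.card)).filter fun p => p.1 < p.2 ∧ p.2 ≤ p.1 + m)
      with hG
    set ψ : ℕ × ℕ → ℕ × ℕ := fun p => (idxS S p.1, idxS S p.2) with hψ
    have himg : F.image ψ ⊆ G := by
      intro q hq
      simp only [mem_image] at hq
      obtain ⟨⟨x, y⟩, hp, rfl⟩ := hq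
      simp only [hF, mem_filter, mem_product] at hp
      obtain ⟨⟨hx, hy⟩, hxy, hgap⟩ := hp
      simp only [hG, hψ, mem_filter, mem_product, mem_range]
      refine ⟨⟨idxS_lt S hx, idxS_lt S hy⟩, idxS_mono S hx hy hxy, ?_⟩
      rcases idxS_gap S hx hy hxy.le with h0 | h
      · omega
      · omega
    have hmemG : ((a : ℕ), (b : ℕ)) ∈ G := by
      simp only [hG, mem_filter, mem_product, mem_range]
      exact ⟨⟨a.isLt, b.isLt⟩, hne, by omega⟩
    have hnotimg : ((a : ℕ), (b : ℕ)) ∉ F.image ψ := by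
      intro hmem
      simp only [mem_image] at hmem
      obtain ⟨⟨x, y⟩, hp, heq2⟩ := hmem
      simp only [hF, mem_filter, mem_product] at hp
      obtain ⟨⟨hx, hy⟩, hxy, hgap⟩ := hp
      simp only [hψ, Prod.mk.injEq] at heq2
      obtain ⟨hqa, hqb⟩ := heq2
      have hxa : x = fS S a := by
        have := fS_idx S hx
        rw [show (⟨idxS S x, _⟩ : Fin S.card) = a from Fin.ext hqa] at this
        exact this.symm
      have hyb : y = fS S b := by
        have := fS_idx S hy
        rw [show (⟨idxS S y, _⟩ : Fin S.card) = b from Fin.ext hqb] at this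
        exact this.symm
      rw [hxa, hyb] at hgap
      omega
    have hssub : F.image ψ ⊂ G := ⟨himg, fun hsub => hnotimg (hsub hmemG)⟩
    have hcard1 : (F.image ψ).card = F.card := by
      apply Finset.card_image_of_injOn
      rintro ⟨x, y⟩ hp ⟨x', y'⟩ hp' hh
      simp only [hF, coe_filter, Set.mem_setOf_eq, mem_product] at hp hp'
      simp only [hψ, Prod.mk.injEq] at hh ⊢
      exact ⟨idxS_inj S hp.1.1 hp'.1.1 hh.1, idxS_inj S hp.1.2 hp'.1.2 hh.2⟩
    have := Finset.card_lt_card hssub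
    rw [hcard1] at this
    unfold cnt at hcnt
    rw [← hF, ← hG] at hcnt
    omega
  -- now S is an interval
  rcases Nat.eq_zero_or_pos l with rfl | hlpos
  · exact ⟨0, by rw [Finset.card_eq_zero.1 hl]; simp⟩
  have hcpos : 0 < S.card := by omega
  set z : Fin S.card := ⟨0, hcpos⟩ with hz
  refine ⟨fS S z, ?_⟩
  have hfb : ∀ b : Fin S.card, fS S b = fS S z + b := by
    intro b
    have h1 := claim z b (Nat.zero_le _)
    have h2 := smGap (fS_strictMono S) ((b : ℕ) - 0) z b (by simp [hz])
    simp only [hz] at h1 h2 ⊢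
    omega
  ext x
  simp only [mem_Ico]
  constructor
  · intro hx
    have h1 := fS_idx S hx
    have h2 := idxS_lt S hx
    rw [hfb] at h1
    simp only [← hl]
    omega
  · rintro ⟨h1, h2⟩
    have hd : x - fS S z < S.card := by omega
    have := fS_mem S ⟨x - fS S z, hd⟩
    rw [hfb ⟨x - fS S z, hd⟩] at this
    simpa [show fS S z + (x - fS S z) = x by omega] using this

noncomputable def csum (J : ℕ → ℝ) (N m : ℕ) : ℝ :=
  if m + 1 = N then J m else J m - J (m + 1)

lemma tele_aux (J : ℕ → ℝ) : ∀ d n : ℕ, d ≤ n →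
    ∑ m ∈ Ico d n, (J m - J (m + 1)) = J d - J n := by
  intro d n hdn
  induction n with
  | zero => interval_cases d; simp
  | succ n ih =>
    rcases Nat.eq_or_lt_of_le hdn with rfl | hlt
    · simp
    · rw [Finset.sum_Ico_succ_top (by omega), ih (by omega)]; ring

lemma tele (J : ℕ → ℝ) {N d : ℕ} (hd1 : 1 ≤ d) (hdN : d < N) :
    J d = ∑ m ∈ Ico 1 N, if d ≤ m then csum J N m else 0 := by
  have h1 : ∑ m ∈ Ico 1 N, (if d ≤ m then csum J N m else 0) =
      ∑ m ∈ Ico d N, csum J N m := by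
    rw [← Finset.sum_filter]
    congr 1
    ext m
    simp only [mem_filter, mem_Ico]
    omega
  rw [h1]
  have hNd : d ≤ N - 1 := by omega
  have hsplit : Ico d N = Ico d (N - 1) ∪ {N - 1} := by
    ext m; simp only [mem_union, mem_Ico, mem_singleton]; omega
  rw [hsplit, Finset.sum_union (by simp)]
  rw [Finset.sum_singleton]
  have hlast : csum J N (N - 1) = J (N - 1) := by
    unfold csum; rw [if_pos (by omega)]
  have hrest : ∑ m ∈ Ico d (N - 1), csum J N m = ∑ m ∈ Ico d (N - 1), (J m - J (m + 1)) := by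
    apply Finset.sum_congr rfl
    intro m hm
    simp only [mem_Ico] at hm
    unfold csum
    rw [if_neg (by omega)]
  rw [hlast, hrest, tele_aux J d (N - 1) hNd]
  ring

lemma csum_pos {J : ℕ → ℝ} {N : ℕ} (hpos : ∀ n, 1 ≤ n → 0 < J n)
    (hdec : ∀ n, 1 ≤ n → J (n + 1) < J n) {m : ℕ} (hm : m ∈ Ico 1 N) :
    0 < csum J N m := by
  simp only [mem_Ico] at hm
  unfold csum
  split_ifs
  · exact hpos m hm.1
  · have := hdec m hm.1; linarith

noncomputable def Esum (J : ℕ → ℝ) (N : ℕ) (t : ℕ → ℝ) : ℝ :=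
  ∑ i ∈ range N, ∑ j ∈ range N, if i < j ∧ t i ≠ t j then J (j - i) else 0

noncomputable def Tcnt (N : ℕ) (t : ℕ → ℝ) (m : ℕ) : ℕ :=
  ∑ i ∈ range N, ∑ j ∈ range N, if i < j ∧ j ≤ i + m ∧ t i ≠ t j then 1 else 0

lemma Esum_eq_sum_csum (J : ℕ → ℝ) (N : ℕ) (t : ℕ → ℝ) :
    Esum J N t = ∑ m ∈ Ico 1 N, csum J N m * (Tcnt N t m : ℝ) := by
  unfold Esum
  have step1 : ∀ i ∈ range N, ∀ j ∈ range N,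
      (if i < j ∧ t i ≠ t j then J (j - i) else 0) =
      ∑ m ∈ Ico 1 N, (if i < j ∧ j ≤ i + m ∧ t i ≠ t j then csum J N m else 0) := by
    intro i hi j hj
    simp only [mem_range] at hi hj
    by_cases hij : i < j ∧ t i ≠ t j
    · rw [if_pos hij]
      have hd1 : 1 ≤ j - i := by omega
      have hdN : j - i < N := by omega
      rw [tele J hd1 hdN]
      apply Finset.sum_congr rfl
      intro m hm
      have : (j - i ≤ m) ↔ (j ≤ i + m) := by omega
      by_cases hc : j ≤ i + m
      · rw [if_pos (this.2 hc), if_pos ⟨hij.1, hc, hij.2⟩]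
      · rw [if_neg (fun hh => hc (this.1 hh)), if_neg (by tauto)]
    · rw [if_neg hij]
      rw [Finset.sum_eq_zero]
      intro m hm
      rw [if_neg (by tauto)]
  rw [Finset.sum_congr rfl fun i hi => Finset.sum_congr rfl fun j hj => step1 i hi j hj]
  rw [show (∑ i ∈ range N, ∑ j ∈ range N, ∑ m ∈ Ico 1 N,
        (if i < j ∧ j ≤ i + m ∧ t i ≠ t j then csum J N m else 0)) =
      ∑ m ∈ Ico 1 N, ∑ i ∈ range N, ∑ j ∈ range N,
        (if i < j ∧ j ≤ i + m ∧ t i ≠ t j then csum J N m else 0) by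
    rw [Finset.sum_congr rfl fun i _ => Finset.sum_comm, Finset.sum_comm]]
  apply Finset.sum_congr rfl
  intro m _
  unfold Tcnt
  push_cast
  rw [Finset.mul_sum]
  apply Finset.sum_congr rfl
  intro i _
  rw [Finset.mul_sum]
  apply Finset.sum_congr rfl
  intro j _
  split_ifs <;> simp


lemma cnt_eq_sum (m : ℕ) (S : Finset ℕ) :
    cnt m S = ∑ i ∈ S, ∑ j ∈ S, if i < j ∧ j ≤ i + m then 1 else 0 := by
  unfold cnt
  rw [Finset.card_filter, Finset.sum_product]

lemma cnt_filter_eq_sum (m N : ℕ) (q : ℕ → Prop) [DecidablePred q] :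
    cnt m ((range N).filter q) = ∑ i ∈ range N, ∑ j ∈ range N,
      if q i ∧ q j ∧ i < j ∧ j ≤ i + m then 1 else 0 := by
  rw [cnt_eq_sum, Finset.sum_filter]
  apply Finset.sum_congr rfl
  intro i _
  by_cases hqi : q i
  · rw [if_pos hqi, Finset.sum_filter]
    apply Finset.sum_congr rfl
    intro j _
    by_cases hqj : q j
    · simp [hqi, hqj]
    · simp [hqi, hqj]
  · rw [if_neg hqi, eq_comm]
    apply Finset.sum_eq_zero
    intro j _
    rw [if_neg (by tauto)]

lemma partition_cnt (N : ℕ) (t : ℕ → ℝ) (ht : ∀ i ∈ range N, t i = 1 ∨ t i = -1) (m : ℕ) :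
    cnt m (range N) = Tcnt N t m + cnt m ((range N).filter (fun i => t i = 1))
      + cnt m ((range N).filter (fun i => ¬ t i = 1)) := by
  rw [cnt_eq_sum, cnt_filter_eq_sum, cnt_filter_eq_sum]
  unfold Tcnt
  rw [← Finset.sum_add_distrib, ← Finset.sum_add_distrib]
  apply Finset.sum_congr rfl
  intro i hi
  rw [← Finset.sum_add_distrib, ← Finset.sum_add_distrib]
  apply Finset.sum_congr rfl
  intro j hj
  have hti := ht i hi
  have htj := ht j hj
  have h1 : (1 : ℝ) ≠ -1 := by norm_num
  rcases hti with h | h <;> rcases htj with h' | h' <;>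
    · simp only [h, h']
      split_ifs <;> first | rfl | omega | (exfalso; tauto) | skip

noncomputable def tLd (k : ℕ) : ℕ → ℝ := fun i => if i < k then 1 else -1
noncomputable def tRd (N k : ℕ) : ℕ → ℝ := fun i => if N - k ≤ i then 1 else -1

lemma tLd_config (N k : ℕ) : ∀ i ∈ range N, tLd k i = 1 ∨ tLd k i = -1 := by
  intro i _; unfold tLd; split_ifs <;> simp

lemma tRd_config (N k : ℕ) : ∀ i ∈ range N, tRd N k i = 1 ∨ tRd N k i = -1 := by
  intro i _; unfold tRd; split_ifs <;> simp

lemma PtL (N k : ℕ) (hk : k ≤ N) :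
    (range N).filter (fun i => tLd k i = 1) = range k := by
  ext i
  simp only [mem_filter, mem_range]; simp only [tLd]
  constructor
  · rintro ⟨hiN, hval⟩
    by_contra hik
    rw [if_neg (by omega)] at hval
    norm_num at hval
  · intro hik
    exact ⟨by omega, by rw [if_pos hik]⟩

lemma MtL (N k : ℕ) : (range N).filter (fun i => ¬ tLd k i = 1) = Ico k N := by
  ext i
  simp only [mem_filter, mem_range, mem_Ico]; simp only [tLd]
  constructor
  · rintro ⟨hiN, hval⟩
    constructor
    · by_contra hik
      rw [if_pos (by omega)] at hval; exact hval rfl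
    · exact hiN
  · rintro ⟨hik, hiN⟩
    refine ⟨hiN, ?_⟩
    rw [if_neg (by omega)]
    norm_num

lemma PtR (N k : ℕ) : (range N).filter (fun i => tRd N k i = 1) = Ico (N - k) N := by
  ext i
  simp only [mem_filter, mem_range, mem_Ico]; simp only [tRd]
  constructor
  · rintro ⟨hiN, hval⟩
    constructor
    · by_contra hik
      rw [if_neg (by omega)] at hval
      norm_num at hval
    · exact hiN
  · rintro ⟨hik, hiN⟩
    exact ⟨hiN, by rw [if_pos hik]⟩

lemma MtR (N k : ℕ) : (range N).filter (fun i => ¬ tRd N k i = 1) = range (N - k) := by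
  ext i
  simp only [mem_filter, mem_range]; simp only [tRd]
  constructor
  · rintro ⟨hiN, hval⟩
    by_contra hik
    rw [if_pos (by omega)] at hval; exact hval rfl
  · intro hik
    refine ⟨by omega, ?_⟩
    rw [if_neg (by omega)]
    norm_num

lemma Tcnt_cast (N : ℕ) (t : ℕ → ℝ) (ht : ∀ i ∈ range N, t i = 1 ∨ t i = -1) (m : ℕ) :
    (Tcnt N t m : ℝ) = (cnt m (range N) : ℝ)
      - (cnt m ((range N).filter (fun i => t i = 1)) : ℝ)
      - (cnt m ((range N).filter (fun i => ¬ t i = 1)) : ℝ) := by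
  have := partition_cnt N t ht m
  have h2 : ((cnt m (range N) : ℕ) : ℝ) = ((Tcnt N t m
      + cnt m ((range N).filter (fun i => t i = 1))
      + cnt m ((range N).filter (fun i => ¬ t i = 1)) : ℕ) : ℝ) := by rw [this]
  push_cast at h2
  linarith

lemma EsumL_eq (J : ℕ → ℝ) (N k : ℕ) (hk : k ≤ N) :
    Esum J N (tLd k) = ∑ m ∈ Ico 1 N, csum J N m * ((cnt m (range N) : ℝ)
      - (cnt m (range k) : ℝ) - (cnt m (range (N - k)) : ℝ)) := by
  rw [Esum_eq_sum_csum]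
  apply Finset.sum_congr rfl
  intro m _
  rw [Tcnt_cast N (tLd k) (tLd_config N k) m, PtL N k hk, MtL N k]
  have : Ico k N = Ico k (k + (N - k)) := by congr 1; omega
  rw [this, cnt_Ico]

lemma EsumR_eq (J : ℕ → ℝ) (N k : ℕ) (hk : k ≤ N) :
    Esum J N (tRd N k) = ∑ m ∈ Ico 1 N, csum J N m * ((cnt m (range N) : ℝ)
      - (cnt m (range k) : ℝ) - (cnt m (range (N - k)) : ℝ)) := by
  rw [Esum_eq_sum_csum]
  apply Finset.sum_congr rfl
  intro m _
  rw [Tcnt_cast N (tRd N k) (tRd_config N k) m, PtR N k, MtR N k]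
  have : Ico (N - k) N = Ico (N - k) ((N - k) + k) := by congr 1; omega
  rw [this, cnt_Ico]

lemma main_compare (J : ℕ → ℝ) (N k : ℕ) (hk : k ≤ N)
    (hpos : ∀ n, 1 ≤ n → 0 < J n) (hdec : ∀ n, 1 ≤ n → J (n + 1) < J n)
    (t : ℕ → ℝ) (ht : ∀ i ∈ range N, t i = 1 ∨ t i = -1)
    (hPcard : ((range N).filter (fun i => t i = 1)).card = k) :
    Esum J N (tLd k) ≤ Esum J N t ∧
    (Esum J N t = Esum J N (tLd k) ↔ ∀ m ∈ Ico 1 N,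
       cnt m ((range N).filter (fun i => t i = 1)) = cnt m (range k) ∧
       cnt m ((range N).filter (fun i => ¬ t i = 1)) = cnt m (range (N - k))) := by
  set P := (range N).filter (fun i => t i = 1) with hP
  set M := (range N).filter (fun i => ¬ t i = 1) with hM
  have hMcard : M.card = N - k := by
    have hPM : P.card + M.card = N := by
      have := Finset.card_filter_add_card_filter_not
        (s := range N) (p := fun i => t i = 1)
      rwa [card_range] at this
    omega
  have hbP : ∀ m, cnt m P ≤ cnt m (range k) := fun m => hPcard ▸ cnt_le m P
  have hbM : ∀ m, cnt m M ≤ cnt m (range (N - k)) := fun m => hMcard ▸ cnt_le m M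
  set g : ℕ → ℝ := fun m => csum J N m *
      (((cnt m (range k) : ℝ) - (cnt m P : ℝ)) +
       ((cnt m (range (N - k)) : ℝ) - (cnt m M : ℝ))) with hg
  have hg0 : ∀ m ∈ Ico 1 N, 0 ≤ g m := by
    intro m hm
    apply mul_nonneg (csum_pos hpos hdec hm).le
    have h1 := hbP m; have h2 := hbM m
    have h1' : (cnt m P : ℝ) ≤ (cnt m (range k) : ℝ) := by exact_mod_cast h1
    have h2' : (cnt m M : ℝ) ≤ (cnt m (range (N - k)) : ℝ) := by exact_mod_cast h2
    linarith
  have hdiff : Esum J N t - Esum J N (tLd k) = ∑ m ∈ Ico 1 N, g m := by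
    rw [Esum_eq_sum_csum, EsumL_eq J N k hk, ← Finset.sum_sub_distrib]
    apply Finset.sum_congr rfl
    intro m hm
    rw [Tcnt_cast N t ht m, ← hP, ← hM, hg]
    ring
  constructor
  · have : 0 ≤ ∑ m ∈ Ico 1 N, g m := Finset.sum_nonneg hg0
    linarith
  · constructor
    · intro heq
      have hsum0 : ∑ m ∈ Ico 1 N, g m = 0 := by rw [← hdiff, heq]; ring
      have hall := (Finset.sum_eq_zero_iff_of_nonneg hg0).1 hsum0
      intro m hm
      have hgm := hall m hm
      have hc := csum_pos hpos hdec hm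
      rw [hg] at hgm
      have hbr : ((cnt m (range k) : ℝ) - (cnt m P : ℝ)) +
          ((cnt m (range (N - k)) : ℝ) - (cnt m M : ℝ)) = 0 := by
        rcases mul_eq_zero.1 hgm with h | h
        · exact absurd h hc.ne'
        · exact h
      have h1 := hbP m; have h2 := hbM m
      have h1' : (cnt m P : ℝ) ≤ (cnt m (range k) : ℝ) := by exact_mod_cast h1
      have h2' : (cnt m M : ℝ) ≤ (cnt m (range (N - k)) : ℝ) := by exact_mod_cast h2
      constructor
      · have : (cnt m P : ℝ) = (cnt m (range k) : ℝ) := by linarith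
        exact_mod_cast this
      · have : (cnt m M : ℝ) = (cnt m (range (N - k)) : ℝ) := by linarith
        exact_mod_cast this
    · intro hall
      have : ∑ m ∈ Ico 1 N, g m = 0 := by
        apply Finset.sum_eq_zero
        intro m hm
        obtain ⟨h1, h2⟩ := hall m hm
        rw [hg]
        simp only [h1, h2]
        ring
      linarith

lemma eq_case (N k : ℕ) (hk : k ≤ N) (hN : 1 ≤ N) (t : ℕ → ℝ)
    (ht : ∀ i ∈ range N, t i = 1 ∨ t i = -1)
    (hPcard : ((range N).filter (fun i => t i = 1)).card = k)
    (hall : ∀ m ∈ Ico 1 N,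
       cnt m ((range N).filter (fun i => t i = 1)) = cnt m (range k) ∧
       cnt m ((range N).filter (fun i => ¬ t i = 1)) = cnt m (range (N - k))) :
    (∀ i ∈ range N, t i = tLd k i) ∨ (∀ i ∈ range N, t i = tRd N k i) := by
  set P := (range N).filter (fun i => t i = 1) with hP
  set M := (range N).filter (fun i => ¬ t i = 1) with hM
  have hMcard : M.card = N - k := by
    have hPM : P.card + M.card = N := by
      have := Finset.card_filter_add_card_filter_not
        (s := range N) (p := fun i => t i = 1)
      rwa [card_range] at this
    omega
  obtain ⟨a, ha⟩ := cnt_eq_interval (Finset.filter_subset _ _) hPcard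
    (fun m h1 h2 => (hall m (by simp [mem_Ico]; omega)).1)
  obtain ⟨b, hb⟩ := cnt_eq_interval (Finset.filter_subset _ _) hMcard
    (fun m h1 h2 => (hall m (by simp [mem_Ico]; omega)).2)
  have h0N : 0 ∈ range N := by simp; omega
  have hmemP : ∀ i ∈ range N, (t i = 1 ↔ i ∈ P) := by
    intro i hi; rw [hP]; simp [mem_filter, hi]
  have hmemM : ∀ i ∈ range N, (¬ t i = 1 ↔ i ∈ M) := by
    intro i hi; rw [hM]; simp [mem_filter, hi]
  rcases ht 0 h0N with h0 | h0
  · -- t 0 = 1, so 0 ∈ P, P = range k, t = tLd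
    left
    have h0P : 0 ∈ P := (hmemP 0 h0N).1 h0
    rw [hP, ha] at h0P
    simp only [mem_Ico] at h0P
    have ha0 : a = 0 := by omega
    rw [ha0] at ha
    have hPr : P = range k := by
      rw [hP, ha]; ext x; simp only [mem_Ico, mem_range]; omega
    intro i hi
    simp only [mem_range] at hi
    unfold tLd
    by_cases hik : i < k
    · rw [if_pos hik]
      have : i ∈ P := by rw [hPr]; simp [hik]
      exact (hmemP i (by simp [hi])).2 this
    · rw [if_neg hik]
      have : i ∉ P := by rw [hPr]; simp [hik]
      have hne := fun hh => this ((hmemP i (by simp [hi])).1 hh)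
      rcases ht i (by simp [hi]) with h | h
      · exact absurd h hne
      · exact h
  · -- t 0 = -1, so 0 ∈ M, M = range (N - k), t = tRd
    right
    have h0M : 0 ∈ M := (hmemM 0 h0N).1 (by rw [h0]; norm_num)
    rw [hM, hb] at h0M
    simp only [mem_Ico] at h0M
    have hb0 : b = 0 := by omega
    rw [hb0] at hb
    have hMr : M = range (N - k) := by
      rw [hM, hb]; ext x; simp only [mem_Ico, mem_range]; omega
    intro i hi
    simp only [mem_range] at hi
    unfold tRd
    by_cases hik : N - k ≤ i
    · rw [if_pos hik]
      have hnotM : i ∉ M := by rw [hMr]; simp; omega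
      by_contra hne
      exact hnotM ((hmemM i (by simp [hi])).1 hne)
    · rw [if_neg hik]
      have hiM : i ∈ M := by rw [hMr]; simp; omega
      have hne : ¬ t i = 1 := (hmemM i (by simp [hi])).2 hiM
      rcases ht i (by simp [hi]) with h | h
      · exact absurd h hne
      · exact h

lemma Esum_congr (J : ℕ → ℝ) (N : ℕ) {t t' : ℕ → ℝ}
    (h : ∀ i ∈ range N, t i = t' i) : Esum J N t = Esum J N t' := by
  unfold Esum
  apply Finset.sum_congr rfl
  intro i hi
  apply Finset.sum_congr rfl
  intro j hj
  rw [h i hi, h j hj]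

lemma B_eq (J : ℕ → ℝ) (N k : ℕ) (hk : k ≤ N) :
    ∑ i ∈ range k, ∑ j ∈ Ico k N, J (j - i) = Esum J N (tLd k) := by
  unfold Esum
  have hcond : ∀ i j : ℕ, (i < j ∧ tLd k i ≠ tLd k j) ↔ (i < k ∧ k ≤ j) := by
    intro i j
    unfold tLd
    constructor
    · rintro ⟨hij, hne⟩
      by_cases hik : i < k <;> by_cases hjk : j < k <;>
        simp only [hik, hjk, if_pos, if_neg, if_true, if_false] at hne <;>
        first | (exfalso; exact hne rfl) | omega |
          (exact ⟨by omega, by omega⟩)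
    · rintro ⟨hik, hkj⟩
      refine ⟨by omega, ?_⟩
      rw [if_pos hik, if_neg (by omega)]
      norm_num
  have step : ∀ i j : ℕ, (if i < j ∧ tLd k i ≠ tLd k j then J (j - i) else 0)
      = if i < k then (if k ≤ j then J (j - i) else 0) else 0 := by
    intro i j
    by_cases h1 : i < k <;> by_cases h2 : k ≤ j
    · rw [if_pos ((hcond i j).2 ⟨h1, h2⟩), if_pos h1, if_pos h2]
    · rw [if_neg (fun hh => h2 ((hcond i j).1 hh).2), if_pos h1, if_neg h2]
    · rw [if_neg (fun hh => h1 ((hcond i j).1 hh).1), if_neg h1]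
    · rw [if_neg (fun hh => h1 ((hcond i j).1 hh).1), if_neg h1]
  rw [Finset.sum_congr rfl fun i _ => Finset.sum_congr rfl fun j _ => step i j]
  have hfi : (range N).filter (fun i => i < k) = range k := by
    ext x; simp only [mem_filter, mem_range]; omega
  have hfj : (range N).filter (fun j => k ≤ j) = Ico k N := by
    ext x; simp only [mem_filter, mem_range, mem_Ico]; omega
  have pull : ∀ i : ℕ, (∑ j ∈ range N, if i < k then (if k ≤ j then J (j - i) else 0) else 0)
      = if i < k then (∑ j ∈ range N, if k ≤ j then J (j - i) else 0) else 0 := by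
    intro i; split_ifs with hh <;> simp [hh]
  rw [Finset.sum_congr rfl fun i _ => pull i]
  rw [eq_comm, ← Finset.sum_filter, hfi]
  apply Finset.sum_congr rfl
  intro i _
  rw [← Finset.sum_filter, hfj]

noncomputable def sext (N : ℕ) (σ : Fin N → ℝ) : ℕ → ℝ :=
  fun i => if h : i < N then σ ⟨i, h⟩ else 1

lemma sext_val {N : ℕ} (σ : Fin N → ℝ) (i : Fin N) : sext N σ ↑i = σ i := by
  unfold sext
  rw [dif_pos i.isLt]

lemma EFin_eq (J : ℕ → ℝ) (N : ℕ) (σ : Fin N → ℝ) :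
    (∑ i : Fin N, ∑ j : Fin N,
      if (i : ℕ) < (j : ℕ) ∧ σ i ≠ σ j then J (Nat.dist (i : ℕ) (j : ℕ)) else 0)
    = Esum J N (sext N σ) := by
  set F : ℕ → ℕ → ℝ := fun a b =>
    if a < b ∧ sext N σ a ≠ sext N σ b then J (b - a) else 0 with hF
  have h1 : ∀ i j : Fin N,
      (if (i : ℕ) < (j : ℕ) ∧ σ i ≠ σ j then J (Nat.dist (i : ℕ) (j : ℕ)) else 0)
      = F ↑i ↑j := by
    intro i j
    rw [hF]
    simp only [sext_val]
    by_cases hc : (i : ℕ) < (j : ℕ) ∧ σ i ≠ σ j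
    · rw [if_pos hc, if_pos hc, Nat.dist_eq_sub_of_le hc.1.le]
    · rw [if_neg hc, if_neg hc]
  rw [Finset.sum_congr rfl fun i _ => Finset.sum_congr rfl fun j _ => h1 i j]
  rw [show (∑ i : Fin N, ∑ j : Fin N, F ↑i ↑j)
      = ∑ i : Fin N, (fun a => ∑ j : Fin N, F a ↑j) ↑i from rfl]
  rw [Fin.sum_univ_eq_sum_range (fun a => ∑ j : Fin N, F a ↑j) N]
  unfold Esum
  apply Finset.sum_congr rfl
  intro a _
  rw [Fin.sum_univ_eq_sum_range (fun b => F a b) N]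


lemma H_eq (N : ℕ) (J : ℕ → ℝ) (h : ℝ) (σ : Fin N → ℝ) (hσ : IsConfig σ) (k : ℕ)
    (hcard : (Finset.univ.filter fun i => σ i = 1).card = k) :
    H N J h σ = 2 * Esum J N (sext N σ) + h * ((N : ℝ) - 2 * k)
      - (1 / 2) * ∑ i : Fin N, ∑ j : Fin N,
          (if i ≠ j then J (Nat.dist (i : ℕ) (j : ℕ)) else 0) := by
  have hsum : ∑ i : Fin N, σ i = 2 * (k : ℝ) - N := by
    have hpt : ∀ i : Fin N, σ i = 2 * (if σ i = 1 then (1 : ℝ) else 0) - 1 := by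
      intro i
      rcases hσ i with hh | hh <;> rw [hh]
      · norm_num
      · rw [if_neg (by norm_num)]; norm_num
    rw [Finset.sum_congr rfl fun i _ => hpt i]
    rw [Finset.sum_sub_distrib, ← Finset.mul_sum, Finset.sum_boole, hcard]
    simp [Finset.card_univ]
  have pt : ∀ i j : Fin N,
      (if (i : ℕ) < (j : ℕ) then J (Nat.dist (i : ℕ) (j : ℕ)) * σ i * σ j else 0)
      = (if (i : ℕ) < (j : ℕ) then J (Nat.dist (i : ℕ) (j : ℕ)) else 0)
        - 2 * (if (i : ℕ) < (j : ℕ) ∧ σ i ≠ σ j then J (Nat.dist (i : ℕ) (j : ℕ)) else 0) := by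
    intro i j
    by_cases hij : (i : ℕ) < (j : ℕ)
    · rcases hσ i with hi1 | hi1 <;> rcases hσ j with hj1 | hj1 <;>
        simp only [hij, if_true, hi1, hj1, ne_eq] <;> norm_num <;> ring
    · simp [hij]
  have hpair : (∑ i : Fin N, ∑ j : Fin N,
      if (i : ℕ) < (j : ℕ) then J (Nat.dist (i : ℕ) (j : ℕ)) * σ i * σ j else 0)
      = (∑ i : Fin N, ∑ j : Fin N,
          if (i : ℕ) < (j : ℕ) then J (Nat.dist (i : ℕ) (j : ℕ)) else 0)
        - 2 * Esum J N (sext N σ) := by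
    rw [Finset.sum_congr rfl fun i _ => Finset.sum_congr rfl fun j _ => pt i j]
    rw [← EFin_eq]
    simp only [Finset.sum_sub_distrib, ← Finset.mul_sum]
  have hhalf : (∑ i : Fin N, ∑ j : Fin N,
      if (i : ℕ) < (j : ℕ) then J (Nat.dist (i : ℕ) (j : ℕ)) else 0)
      = (1 / 2) * ∑ i : Fin N, ∑ j : Fin N,
          (if i ≠ j then J (Nat.dist (i : ℕ) (j : ℕ)) else 0) := by
    have hsplit : ∀ i j : Fin N,
        (if i ≠ j then J (Nat.dist (i : ℕ) (j : ℕ)) else 0)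
        = (if (i : ℕ) < (j : ℕ) then J (Nat.dist (i : ℕ) (j : ℕ)) else 0)
          + (if (j : ℕ) < (i : ℕ) then J (Nat.dist (i : ℕ) (j : ℕ)) else 0) := by
      intro i j
      rcases lt_trichotomy (i : ℕ) (j : ℕ) with hlt | heq | hgt
      · rw [if_pos (by intro hh; subst hh; omega), if_pos hlt, if_neg (by omega)]; ring
      · rw [if_neg (by intro hh; exact hh (Fin.ext heq)), if_neg (by omega), if_neg (by omega)]
        ring
      · rw [if_pos (by intro hh; subst hh; omega), if_neg (by omega), if_pos hgt]; ring
    rw [Finset.sum_congr rfl fun i _ => Finset.sum_congr rfl fun j _ => hsplit i j]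
    have hswap : (∑ i : Fin N, ∑ j : Fin N,
        if (j : ℕ) < (i : ℕ) then J (Nat.dist (i : ℕ) (j : ℕ)) else 0)
        = ∑ i : Fin N, ∑ j : Fin N,
          if (i : ℕ) < (j : ℕ) then J (Nat.dist (i : ℕ) (j : ℕ)) else 0 := by
      rw [Finset.sum_comm]
      apply Finset.sum_congr rfl
      intro i _
      apply Finset.sum_congr rfl
      intro j _
      rw [Nat.dist_comm]
    simp only [Finset.sum_add_distrib, hswap]
    ring
  unfold H
  rw [hpair, hhalf, hsum]
  ring


/-- Theorem 4.2: for any configuration with exactly `k` plus spins,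
`H(σ) ≥ 2 ∑_{i=1}^{k} ∑_{j=k+1}^{N} J(|i-j|) + h (N - 2k) - (1/2) ∑_{i≠j} J(|i-j|)`,
with equality iff `σ = L^(k)` or `σ = R^(k)`. -/
theorem hamiltonian_lower_bound (N k : ℕ) (hN : 2 ≤ N) (hk : k ≤ N)
    (J : ℕ → ℝ) (hpos : ∀ n, 1 ≤ n → 0 < J n) (hdec : ∀ n, 1 ≤ n → J (n + 1) < J n)
    (h : ℝ) (σ : Fin N → ℝ) (hσ : IsConfig σ)
    (hcard : (Finset.univ.filter fun i => σ i = 1).card = k) :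
    (2 * (∑ i ∈ Finset.range k, ∑ j ∈ Finset.Ico k N, J (j - i))
        + h * ((N : ℝ) - 2 * k)
        - (1 / 2) * ∑ i : Fin N, ∑ j : Fin N,
            (if i ≠ j then J (Nat.dist (i : ℕ) (j : ℕ)) else 0)
      ≤ H N J h σ) ∧
    (H N J h σ =
        2 * (∑ i ∈ Finset.range k, ∑ j ∈ Finset.Ico k N, J (j - i))
          + h * ((N : ℝ) - 2 * k)
          - (1 / 2) * ∑ i : Fin N, ∑ j : Fin N,
              (if i ≠ j then J (Nat.dist (i : ℕ) (j : ℕ)) else 0) ↔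
      σ = Lconf N k ∨ σ = Rconf N k) := by
  have ht : ∀ i ∈ range N, sext N σ i = 1 ∨ sext N σ i = -1 := by
    intro i hi
    simp only [mem_range] at hi
    unfold sext
    rw [dif_pos hi]
    exact hσ _
  have hscard : ((range N).filter (fun i => sext N σ i = 1)).card = k := by
    have himg : (range N).filter (fun i => sext N σ i = 1)
        = Finset.image Fin.val (Finset.univ.filter fun i => σ i = 1) := by
      ext x
      simp only [mem_filter, mem_range, mem_image, mem_univ, true_and]
      constructor
      · rintro ⟨hx, hval⟩
        refine ⟨⟨x, hx⟩, ?_, rfl⟩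
        rw [← sext_val σ ⟨x, hx⟩]
        exact hval
      · rintro ⟨i, hval, rfl⟩
        exact ⟨i.isLt, by rw [sext_val]; exact hval⟩
    rw [himg, Finset.card_image_of_injective _ Fin.val_injective, hcard]
  have hB := B_eq J N k hk
  have hH := H_eq N J h σ hσ k hcard
  have hcmp := main_compare J N k hk hpos hdec (sext N σ) ht hscard
  constructor
  · rw [hH, hB]
    have := hcmp.1
    linarith
  · rw [hH, hB]
    constructor
    · intro heq
      have hEeq : Esum J N (sext N σ) = Esum J N (tLd k) := by linarith
      have hconds := hcmp.2.1 hEeq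
      rcases eq_case N k hk (by omega) (sext N σ) ht hscard hconds with hL | hR
      · left
        funext i
        have := hL ↑i (by simp [i.isLt])
        rw [sext_val] at this
        rw [this]
        rfl
      · right
        funext i
        have := hR ↑i (by simp [i.isLt])
        rw [sext_val] at this
        rw [this]
        rfl
    · rintro (rfl | rfl)
      · have hEeq : Esum J N (sext N (Lconf N k)) = Esum J N (tLd k) := by
          apply Esum_congr
          intro i hi
          simp only [mem_range] at hi
          unfold sext Lconf tLd
          rw [dif_pos hi]
        rw [hEeq]
      · have hEeq : Esum J N (sext N (Rconf N k)) = Esum J N (tLd k) := by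
          have h1 : Esum J N (sext N (Rconf N k)) = Esum J N (tRd N k) := by
            apply Esum_congr
            intro i hi
            simp only [mem_range] at hi
            unfold sext Rconf tRd
            rw [dif_pos hi]
          rw [h1, EsumR_eq J N k hk, ← EsumL_eq J N k hk]
        rw [hEeq]
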